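/- In the star graphs G(m) and H(m), classify nodes into three classes: class 1 = the center, class 2 = r1-leaves, class 3 = r2-leaves. Then for all pairs (u1,v1) of nodes of G(m) and (u2,v2) of nodes of H(m) with (class(u1), class(v1)) = (class(u2), class(v2)), and every FOC2 formula φ(x,y) with all counting thresholds ≤ m, (G(m),u1,v1) ⊨ φ iff (H(m),u2,v2) ⊨ φ. The proof is by induction on quantifier depth, using that class-1 nodes number exactly 1 in each graph and class-2, class-3 nodes each number more than m in each graph. -/

import Mathlib

inductive Var : Type
  | x | y
deriving DecidableEq

structure MRGraph (P1 P2 : Type) where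
  V : Type
  [fintV : Fintype V]
  [decV : DecidableEq V]
  unary : P1 → V → Prop
  rel : P2 → V → V → Prop
  [decU : ∀ p, DecidablePred (unary p)]
  [decR : ∀ r, DecidableRel (rel r)]

attribute [instance] MRGraph.fintV MRGraph.decV MRGraph.decU MRGraph.decR

inductive FOC2 (P1 P2 : Type) : Type
  | tru : FOC2 P1 P2
  | atom : P1 → Var → FOC2 P1 P2
  | rel : P2 → Var → Var → FOC2 P1 P2
  | and : FOC2 P1 P2 → FOC2 P1 P2 → FOC2 P1 P2
  | or : FOC2 P1 P2 → FOC2 P1 P2 → FOC2 P1 P2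
  | not : FOC2 P1 P2 → FOC2 P1 P2
  | exge : ℕ → Var → FOC2 P1 P2 → FOC2 P1 P2

variable {P1 P2 : Type}

/-- Satisfaction of a `FOC2` formula in a multi-relational graph under an assignment. -/
def MRGraph.sat (G : MRGraph P1 P2) : (Var → G.V) → FOC2 P1 P2 → Prop
  | _, .tru => True
  | σ, .atom p v => G.unary p (σ v)
  | σ, .rel r u w => G.rel r (σ u) (σ w)
  | σ, .and φ ψ => G.sat σ φ ∧ G.sat σ ψ
  | σ, .or φ ψ => G.sat σ φ ∨ G.sat σ ψ
  | σ, .not φ => ¬ G.sat σ φ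
  | σ, .exge n v φ => ∃ S : Finset G.V, S.card = n ∧ ∀ a ∈ S, G.sat (Function.update σ v a) φ

/-- Quantifier depth. -/
def FOC2.depth : FOC2 P1 P2 → ℕ
  | .tru => 0
  | .atom _ _ => 0
  | .rel _ _ _ => 0
  | .and φ ψ => max φ.depth ψ.depth
  | .or φ ψ => max φ.depth ψ.depth
  | .not φ => φ.depth
  | .exge _ _ φ => φ.depth + 1

/-- All counting thresholds are at most `m`. -/
def FOC2.thresholdsLe (m : ℕ) : FOC2 P1 P2 → Prop
  | .tru => True
  | .atom _ _ => True
  | .rel _ _ _ => True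
  | .and φ ψ => φ.thresholdsLe m ∧ ψ.thresholdsLe m
  | .or φ ψ => φ.thresholdsLe m ∧ ψ.thresholdsLe m
  | .not φ => φ.thresholdsLe m
  | .exge n _ φ => n ≤ m ∧ φ.thresholdsLe m

/-- Free variables. -/
def FOC2.freeVars : FOC2 P1 P2 → Finset Var
  | .tru => ∅
  | .atom _ v => {v}
  | .rel _ u w => {u, w}
  | .and φ ψ => φ.freeVars ∪ ψ.freeVars
  | .or φ ψ => φ.freeVars ∪ ψ.freeVars
  | .not φ => φ.freeVars
  | .exge _ v φ => φ.freeVars \ {v}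

/-- Parse-tree size. -/
def FOC2.size : FOC2 P1 P2 → ℕ
  | .tru => 1
  | .atom _ _ => 1
  | .rel _ _ _ => 1
  | .and φ ψ => φ.size + ψ.size + 1
  | .or φ ψ => φ.size + ψ.size + 1
  | .not φ => φ.size + 1
  | .exge _ _ φ => φ.size + 1


/-- `r`-edge predicate from the centre of a star with `p` r1-leaves (nodes `1..p`)
followed by r2-leaves (nodes `p+1..`). `r = true` is `r1`, `r = false` is `r2`. -/
def starEdge (p : ℕ) (r : Bool) (i : ℕ) : Prop :=
  (r = true ∧ 1 ≤ i ∧ i ≤ p) ∨ (r = false ∧ p + 1 ≤ i)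

instance (p : ℕ) (r : Bool) (i : ℕ) : Decidable (starEdge p r i) := by
  unfold starEdge; infer_instance

/-- Star graph: node `0` is the centre, nodes `1..p` are `r1`-leaves and
nodes `p+1..p+q` are `r2`-leaves; edges are symmetric. -/
def star (p q : ℕ) : MRGraph Empty Bool where
  V := Fin (p + q + 1)
  unary := fun e _ => e.elim
  rel := fun r a b =>
    (a.val = 0 ∧ starEdge p r b.val) ∨ (b.val = 0 ∧ starEdge p r a.val)
  decU := fun e => e.elim
  decR := fun _ _ _ => by infer_instance

/-- The centre of a star graph. -/
def starCenter (p q : ℕ) : (star p q).V := ⟨0, Nat.succ_pos _⟩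

/-- Class of a node of a star graph: `0` = centre, `1` = r1-leaf, `2` = r2-leaf. -/
def clsStar (p q : ℕ) (v : (star p q).V) : Fin 3 :=
  if v.val = 0 then 0 else if v.val ≤ p then 1 else 2


section AuxStar

lemma fin3_cases (c : Fin 3) : c = 0 ∨ c = 1 ∨ c = 2 := by fin_cases c <;> simp

lemma clsStar_eq_zero {p q : ℕ} (a : (star p q).V) :
    clsStar p q a = 0 ↔ a.val = 0 := by
  unfold clsStar; split_ifs <;> simp_all

lemma clsStar_eq_one {p q : ℕ} (a : (star p q).V) :
    clsStar p q a = 1 ↔ (1 ≤ a.val ∧ a.val ≤ p) := by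
  unfold clsStar; split_ifs <;> simp_all <;> omega

lemma clsStar_eq_two {p q : ℕ} (a : (star p q).V) :
    clsStar p q a = 2 ↔ p + 1 ≤ a.val := by
  unfold clsStar; split_ifs <;> simp_all <;> omega

lemma clsStar_center (p q : ℕ) : clsStar p q (starCenter p q) = 0 := by
  simp [clsStar, starCenter]

/-- Edge relation expressed purely via classes. -/
lemma rel_iff_cls (p q : ℕ) (r : Bool) (a b : (star p q).V) :
    (star p q).rel r a b ↔
      ((clsStar p q a = 0 ∧ ((r = true ∧ clsStar p q b = 1) ∨ (r = false ∧ clsStar p q b = 2))) ∨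
       (clsStar p q b = 0 ∧ ((r = true ∧ clsStar p q a = 1) ∨ (r = false ∧ clsStar p q a = 2)))) := by
  show ((a.val = 0 ∧ starEdge p r b.val) ∨ (b.val = 0 ∧ starEdge p r a.val)) ↔ _
  rw [clsStar_eq_zero, clsStar_eq_zero, clsStar_eq_one, clsStar_eq_one,
    clsStar_eq_two, clsStar_eq_two]
  unfold starEdge
  tauto

lemma card_cls_one (p q : ℕ) :
    p ≤ (Finset.univ.filter (fun b : (star p q).V => clsStar p q b = 1)).card := by
  have h : ∀ i : Fin p, ((⟨i.val + 1, by have := i.isLt; omega⟩ : Fin (p + q + 1)) :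
      (star p q).V) ∈ Finset.univ.filter (fun b : (star p q).V => clsStar p q b = 1) := by
    intro i
    refine (Finset.mem_filter (α := (star p q).V)).mpr ⟨Finset.mem_univ _, (clsStar_eq_one (p := p) (q := q) _).mpr ?_⟩
    constructor
    · show 1 ≤ i.val + 1; omega
    · show i.val + 1 ≤ p; have := i.isLt; omega
  calc p = (Finset.univ : Finset (Fin p)).card := (Finset.card_fin p).symm
    _ ≤ _ := Finset.card_le_card_of_injOn _ (fun i _ => h i)
        (fun i _ j _ hij => by
          apply Fin.ext
          have : i.val + 1 = j.val + 1 := congrArg Fin.val hij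
          omega)

lemma card_cls_two (p q : ℕ) :
    q ≤ (Finset.univ.filter (fun b : (star p q).V => clsStar p q b = 2)).card := by
  have h : ∀ i : Fin q, ((⟨p + 1 + i.val, by have := i.isLt; omega⟩ : Fin (p + q + 1)) :
      (star p q).V) ∈ Finset.univ.filter (fun b : (star p q).V => clsStar p q b = 2) := by
    intro i
    refine (Finset.mem_filter (α := (star p q).V)).mpr ⟨Finset.mem_univ _, (clsStar_eq_two (p := p) (q := q) _).mpr ?_⟩
    show p + 1 ≤ p + 1 + i.val
    omega
  calc q = (Finset.univ : Finset (Fin q)).card := (Finset.card_fin q).symm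
    _ ≤ _ := Finset.card_le_card_of_injOn _ (fun i _ => h i)
        (fun i _ j _ hij => by
          apply Fin.ext
          have : p + 1 + i.val = p + 1 + j.val := congrArg Fin.val hij
          omega)

/-- One direction of the counting-quantifier step. -/
lemma exge_step (m n p q p' q' : ℕ) (hn : n ≤ m) (hp' : m ≤ p') (hq' : m ≤ q')
    (v : Var) (ψ : FOC2 Empty Bool)
    (σ1 : Var → (star p q).V) (σ2 : Var → (star p' q').V)
    (IH : ∀ (a : (star p q).V) (b : (star p' q').V), clsStar p q a = clsStar p' q' b →
        ((star p q).sat (Function.update σ1 v a) ψ ↔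
         (star p' q').sat (Function.update σ2 v b) ψ)) :
    (star p q).sat σ1 (.exge n v ψ) → (star p' q').sat σ2 (.exge n v ψ) := by
  rintro ⟨S, hScard, hSsat⟩
  rcases Nat.eq_zero_or_pos n with rfl | hn1
  · exact ⟨∅, by simp, by simp⟩
  have hSne : S.Nonempty := by rw [← Finset.card_pos, hScard]; exact hn1
  by_cases hex : ∃ a ∈ S, clsStar p q a ≠ 0
  · obtain ⟨a, haS, ha0⟩ := hex
    have hbig : n ≤ (Finset.univ.filter
        (fun b : (star p' q').V => clsStar p' q' b = clsStar p q a)).card := by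
      rcases fin3_cases (clsStar p q a) with h | h | h
      · exact absurd h ha0
      · rw [h]; exact le_trans (hn.trans hp') (card_cls_one p' q')
      · rw [h]; exact le_trans (hn.trans hq') (card_cls_two p' q')
    obtain ⟨S', hsub, hS'card⟩ := Finset.exists_subset_card_eq hbig
    refine ⟨S', hS'card, fun b hb => ?_⟩
    have hbcls : clsStar p' q' b = clsStar p q a := by
      have := hsub hb
      simpa using this
    exact (IH a b hbcls.symm).mp (hSsat a haS)
  · push_neg at hex
    obtain ⟨a, haS⟩ := hSne
    have hsub : S ⊆ {a} := by
      intro b hb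
      have hb0 : b.val = 0 := (clsStar_eq_zero b).mp (hex b hb)
      have ha0 : a.val = 0 := (clsStar_eq_zero a).mp (hex a haS)
      simp only [Finset.mem_singleton]
      exact Fin.ext (hb0.trans ha0.symm)
    have hn1' : n = 1 := le_antisymm
      (by rw [← hScard]; simpa using Finset.card_le_card hsub) hn1
    refine ⟨{starCenter p' q'}, by simp [hn1'], fun b hb => ?_⟩
    rw [Finset.mem_singleton] at hb
    subst hb
    exact (IH a (starCenter p' q')
      (((clsStar_eq_zero a).mpr ((clsStar_eq_zero a).mp (hex a haS))).trans
        (clsStar_center p' q').symm)).mp (hSsat a haS)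

lemma star_main (m : ℕ) (φ : FOC2 Empty Bool) (hth : φ.thresholdsLe m) :
    ∀ (p q p' q' : ℕ), m ≤ p → m ≤ q → m ≤ p' → m ≤ q' →
    ∀ (σ1 : Var → (star p q).V) (σ2 : Var → (star p' q').V),
    (∀ w, clsStar p q (σ1 w) = clsStar p' q' (σ2 w)) →
    ((star p q).sat σ1 φ ↔ (star p' q').sat σ2 φ) := by
  induction φ with
  | tru => intros; simp [MRGraph.sat]
  | atom e v => exact e.elim
  | rel r u w =>
    intro p q p' q' hp hq hp' hq' σ1 σ2 hcls
    show (star p q).rel r (σ1 u) (σ1 w) ↔ (star p' q').rel r (σ2 u) (σ2 w)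
    rw [rel_iff_cls, rel_iff_cls, hcls u, hcls w]
  | and φ ψ ihφ ihψ =>
    intro p q p' q' hp hq hp' hq' σ1 σ2 hcls
    exact and_congr (ihφ hth.1 p q p' q' hp hq hp' hq' σ1 σ2 hcls)
      (ihψ hth.2 p q p' q' hp hq hp' hq' σ1 σ2 hcls)
  | or φ ψ ihφ ihψ =>
    intro p q p' q' hp hq hp' hq' σ1 σ2 hcls
    exact or_congr (ihφ hth.1 p q p' q' hp hq hp' hq' σ1 σ2 hcls)
      (ihψ hth.2 p q p' q' hp hq hp' hq' σ1 σ2 hcls)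
  | not φ ihφ =>
    intro p q p' q' hp hq hp' hq' σ1 σ2 hcls
    exact not_congr (ihφ hth p q p' q' hp hq hp' hq' σ1 σ2 hcls)
  | exge n v ψ ihψ =>
    intro p q p' q' hp hq hp' hq' σ1 σ2 hcls
    have hupd : ∀ (a : (star p q).V) (b : (star p' q').V), clsStar p q a = clsStar p' q' b →
        ∀ w, clsStar p q (Function.update σ1 v a w) = clsStar p' q' (Function.update σ2 v b w) := by
      intro a b hab w
      rcases eq_or_ne w v with rfl | hw
      · simpa using hab
      · simpa [Function.update_of_ne hw] using hcls w
    constructor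
    · exact exge_step m n p q p' q' hth.1 hp' hq' v ψ σ1 σ2
        (fun a b hab => ihψ hth.2 p q p' q' hp hq hp' hq' _ _ (hupd a b hab))
    · exact exge_step m n p' q' p q hth.1 hp hq v ψ σ2 σ1
        (fun a b hab => (ihψ hth.2 p q p' q' hp hq hp' hq' _ _
          (fun w => (hupd b a hab.symm w))).symm)

end AuxStar

/-- For pairs of nodes of `G(m)` and `H(m)` with matching class labels, no `FOC2` formula
with all counting thresholds at most `m` can distinguish them. -/
theorem stmt19 (m : ℕ) (φ : FOC2 Empty Bool) (hth : φ.thresholdsLe m)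
    (u1 v1 : (star (2 * m + 1) (2 * m)).V) (u2 v2 : (star (2 * m) (2 * m + 1)).V)
    (hu : clsStar (2 * m + 1) (2 * m) u1 = clsStar (2 * m) (2 * m + 1) u2)
    (hv : clsStar (2 * m + 1) (2 * m) v1 = clsStar (2 * m) (2 * m + 1) v2) :
    ((star (2 * m + 1) (2 * m)).sat
        (fun w => match w with | Var.x => u1 | Var.y => v1) φ ↔
     (star (2 * m) (2 * m + 1)).sat
        (fun w => match w with | Var.x => u2 | Var.y => v2) φ) := by
  refine star_main m φ hth (2 * m + 1) (2 * m) (2 * m) (2 * m + 1)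
    (by omega) (by omega) (by omega) (by omega) _ _ ?_
  intro w
  cases w
  · exact hu
  · exact hv
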